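/- Let β > 1 and define f_β(α) = H(α) + (β/2)·(2α−1)² for α ∈ (0,1). Then: (i) there is a unique q⁺_β ∈ (1/2,1) satisfying ln((1−q⁺_β)/q⁺_β) + 2β(2q⁺_β−1) = 0 and a unique q⁻_β ∈ (0,1/2) satisfying the same equation, and q⁺_β + q⁻_β = 1; (ii) f_β is strictly increasing on (0, q⁻_β), strictly decreasing on (q⁻_β, 1/2), strictly increasing on (1/2, q⁺_β), and strictly decreasing on (q⁺_β, 1); in particular q⁺_β and q⁻_β are the maximizers of f_β on (0,1); (iii) the second derivative f_β''(α) = −1/(α(1−α)) + 4β is strictly negative at both q⁺_β and q⁻_β. -/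

import Mathlib

/-- The binary entropy function `H(α) = -α ln α - (1-α) ln(1-α)`. -/
noncomputable def binEnt (α : ℝ) : ℝ := -α * Real.log α - (1 - α) * Real.log (1 - α)

/-- The function `f_β(α) = H(α) + (β/2)(2α-1)²`. -/
noncomputable def fbeta (β α : ℝ) : ℝ := binEnt α + β / 2 * (2 * α - 1) ^ 2


open Set Real

noncomputable def gb (β q : ℝ) : ℝ := Real.log ((1 - q) / q) + 2 * β * (2 * q - 1)
noncomputable def pb (β q : ℝ) : ℝ := 4 * β - 1 / (q * (1 - q))

lemma gb_eq (β : ℝ) {q : ℝ} (h0 : 0 < q) (h1 : q < 1) :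
    gb β q = Real.log (1 - q) - Real.log q + 2 * β * (2 * q - 1) := by
  rw [gb, Real.log_div (by linarith) (by linarith)]

lemma hasDerivAt_gb (β : ℝ) {q : ℝ} (h0 : 0 < q) (h1 : q < 1) :
    HasDerivAt (gb β) (pb β q) q := by
  have h1' : (0:ℝ) < 1 - q := by linarith
  have hL : HasDerivAt (fun x : ℝ => Real.log (1 - x)) (-1 / (1 - q)) q := by
    have := (((hasDerivAt_id q).const_sub 1).log (by linarith : (1:ℝ) - q ≠ 0))
    simpa using this
  have hM : HasDerivAt (fun x : ℝ => Real.log x) (1 / q) q := by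
    simpa [one_div] using Real.hasDerivAt_log (ne_of_gt h0)
  have hP : HasDerivAt (fun x : ℝ => 2 * β * (2 * x - 1)) (2 * β * 2) q := by
    have := (((hasDerivAt_id q).const_mul 2).sub_const 1).const_mul (2 * β)
    simpa using this
  have hmain : HasDerivAt (fun x => Real.log (1 - x) - Real.log x + 2 * β * (2 * x - 1))
      (-1 / (1 - q) - 1 / q + 2 * β * 2) q := (hL.sub hM).add hP
  have heq : (-1 / (1 - q) - 1 / q + 2 * β * 2) = pb β q := by
    rw [pb]; field_simp; ring
  rw [heq] at hmain
  apply hmain.congr_of_eventuallyEq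
  filter_upwards [Ioo_mem_nhds h0 h1] with x hx
  exact gb_eq β hx.1 hx.2

lemma hasDerivAt_fbeta (β : ℝ) {q : ℝ} (h0 : 0 < q) (h1 : q < 1) :
    HasDerivAt (fbeta β) (gb β q) q := by
  have h1' : (0:ℝ) < 1 - q := by linarith
  have hA : HasDerivAt (fun x : ℝ => -x * Real.log x) (-Real.log q - 1) q := by
    have := ((hasDerivAt_id q).mul (Real.hasDerivAt_log (ne_of_gt h0))).neg
    convert this using 1
    · rfl
    · rfl
    · ext x; simp [id]; try ring
    · simp [id]; field_simp; ring
  have hB : HasDerivAt (fun x : ℝ => (1 - x) * Real.log (1 - x)) (-Real.log (1 - q) - 1) q := by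
    have h2 : HasDerivAt (fun x : ℝ => (1 : ℝ) - x) (-1) q := by
      simpa using (hasDerivAt_id q).const_sub 1
    have h3 : HasDerivAt (fun x : ℝ => Real.log (1 - x)) (-1 / (1 - q)) q := by
      simpa using h2.log (by linarith : (1:ℝ) - q ≠ 0)
    have := h2.mul h3
    convert this using 1
    · rfl
    · rfl
    · rfl
    have : (1:ℝ) - q ≠ 0 := by linarith
    field_simp
    ring
  have hC : HasDerivAt (fun x : ℝ => β / 2 * (2 * x - 1) ^ 2) (β / 2 * (2 * (2 * q - 1) * 2)) q := by
    have h2 : HasDerivAt (fun x : ℝ => 2 * x - 1) 2 q := by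
      simpa using ((hasDerivAt_id q).const_mul 2).sub_const 1
    have := (h2.pow 2).const_mul (β / 2)
    convert this using 1
    · rfl
    · rfl
    · rfl
    rw [show (2:ℕ) - 1 = 1 from rfl]; push_cast
    ring
  have hmain := (hA.sub hB).add hC
  have heq : (-Real.log q - 1 - (-Real.log (1 - q) - 1) + β / 2 * (2 * (2 * q - 1) * 2)) = gb β q := by
    rw [gb_eq β h0 h1]; ring
  rw [heq] at hmain
  exact hmain.congr_of_eventuallyEq (by filter_upwards with x; rw [fbeta, binEnt]; simp only [Pi.add_apply, Pi.sub_apply]; try ring)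

lemma gb_half (β : ℝ) : gb β (1 / 2) = 0 := by
  rw [gb]; norm_num

lemma gb_symm (β : ℝ) {q : ℝ} (h0 : 0 < q) (h1 : q < 1) : gb β (1 - q) = -gb β q := by
  rw [gb_eq β (by linarith) (by linarith), gb_eq β h0 h1]
  ring_nf

lemma fbeta_symm (β α : ℝ) : fbeta β (1 - α) = fbeta β α := by
  rw [fbeta, fbeta, binEnt, binEnt]
  have : (1 : ℝ) - (1 - α) = α := by ring
  rw [this]; ring

lemma pb_anti (β : ℝ) : StrictAntiOn (pb β) (Ioo (1/2 : ℝ) 1) := by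
  intro x hx y hy hxy
  have hx1 : 0 < x * (1 - x) := by nlinarith [hx.1, hx.2]
  have hy1 : 0 < y * (1 - y) := by nlinarith [hy.1, hy.2]
  have h : y * (1 - y) < x * (1 - x) := by nlinarith [hx.1, hy.2]
  have := one_div_lt_one_div_of_lt hy1 h
  rw [pb, pb]; linarith

lemma deriv_gb (β : ℝ) {q : ℝ} (h0 : 0 < q) (h1 : q < 1) : deriv (gb β) q = pb β q :=
  (hasDerivAt_gb β h0 h1).deriv

lemma gb_concave (β : ℝ) : StrictConcaveOn ℝ (Ico (1/2 : ℝ) 1) (gb β) := by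
  apply StrictAntiOn.strictConcaveOn_of_deriv (convex_Ico _ _)
  · intro x hx
    exact (hasDerivAt_gb β (by linarith [hx.1] : (0:ℝ) < x) hx.2).continuousAt.continuousWithinAt
  · rw [interior_Ico]
    intro x hx y hy hxy
    rw [deriv_gb β (by linarith [hx.1]) hx.2, deriv_gb β (by linarith [hy.1]) hy.2]
    exact pb_anti β hx hy hxy

lemma concave_pos {f : ℝ → ℝ} {s : Set ℝ} (h : StrictConcaveOn ℝ s f) {u v w : ℝ}
    (hu : u ∈ s) (hw : w ∈ s) (huv : u < v) (hvw : v < w) (h0 : f u = 0) (h2 : f w = 0) :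
    0 < f v := by
  have huw : u < w := huv.trans hvw
  have hwu : w - u ≠ 0 := by linarith
  have ha : (0:ℝ) < (w - v) / (w - u) := div_pos (by linarith) (by linarith)
  have hb : (0:ℝ) < (v - u) / (w - u) := div_pos (by linarith) (by linarith)
  have hab : (w - v) / (w - u) + (v - u) / (w - u) = 1 := by field_simp; ring
  have := h.2 hu hw (by linarith : u ≠ w) ha hb hab
  simp only [smul_eq_mul] at this
  have hcomb : (w - v) / (w - u) * u + (v - u) / (w - u) * w = v := by
    field_simp
    ring
  rw [hcomb, h0, h2] at this
  simpa using this

lemma concave_neg {f : ℝ → ℝ} {s : Set ℝ} (h : StrictConcaveOn ℝ s f) {u v w : ℝ}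
    (hu : u ∈ s) (hw : w ∈ s) (huv : u < v) (hvw : v < w) (h0 : f u = 0) (h1 : f v = 0) :
    f w < 0 := by
  by_contra hge
  push_neg at hge
  have huw : u < w := huv.trans hvw
  have hwu : w - u ≠ 0 := by linarith
  have ha : (0:ℝ) < (w - v) / (w - u) := div_pos (by linarith) (by linarith)
  have hb : (0:ℝ) < (v - u) / (w - u) := div_pos (by linarith) (by linarith)
  have hab : (w - v) / (w - u) + (v - u) / (w - u) = 1 := by field_simp; ring
  have := h.2 hu hw (by linarith : u ≠ w) ha hb hab
  simp only [smul_eq_mul] at this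
  have hcomb : (w - v) / (w - u) * u + (v - u) / (w - u) * w = v := by
    field_simp
    ring
  rw [hcomb, h0, h1] at this
  nlinarith

lemma exists_qp (β : ℝ) (hβ : 1 < β) :
    ∃ qp : ℝ, qp ∈ Ioo (1/2 : ℝ) 1 ∧ gb β qp = 0 := by
  have hβ0 : (0:ℝ) < β := by linarith
  obtain ⟨q0, hq0a, hq0b, hq0key⟩ :
      ∃ q0 : ℝ, 1/2 < q0 ∧ q0 < 5/6 ∧ 1 / (4 * β) < q0 * (1 - q0) := by
    refine ⟨1/2 + Real.sqrt ((β - 1) / β) / 3, ?_, ?_, ?_⟩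
    · have := Real.sqrt_pos.2 (div_pos (by linarith : (0:ℝ) < β - 1) hβ0)
      linarith
    · have h1 : (β - 1) / β < 1 := by rw [div_lt_one hβ0]; linarith
      have h2 : Real.sqrt ((β - 1) / β) < 1 := by
        rw [Real.sqrt_lt' one_pos]
        simpa using h1
      linarith
    · have hsq : Real.sqrt ((β - 1) / β) ^ 2 = (β - 1) / β :=
        Real.sq_sqrt (div_nonneg (by linarith) (by linarith))
      have h1 : (1/2 + Real.sqrt ((β - 1) / β) / 3) * (1 - (1/2 + Real.sqrt ((β - 1) / β) / 3))
          = 1/4 - ((β - 1) / β) / 9 := by linear_combination (-(1:ℝ)/9) * hsq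
      rw [h1]
      have e1 : (β - 1) / β * β = β - 1 := by field_simp
      have e2 : 1 / (4 * β) * (4 * β) = 1 := by field_simp
      nlinarith [e1, e2, hβ0, hβ]
  -- gb β q0 > 0
  have hmono : StrictMonoOn (gb β) (Icc (1/2 : ℝ) q0) := by
    apply strictMonoOn_of_deriv_pos (convex_Icc _ _)
    · intro x hx
      exact (hasDerivAt_gb β (by linarith [hx.1] : (0:ℝ) < x)
        (by linarith [hx.2] : x < 1)).continuousAt.continuousWithinAt
    · rw [interior_Icc]
      intro x hx
      have hx0 : (0:ℝ) < x := by linarith [hx.1]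
      have hx1 : x < 1 := by linarith [hx.2]
      rw [deriv_gb β hx0 hx1, pb]
      have hxx : 1 / (4 * β) < x * (1 - x) := by nlinarith [hx.1, hx.2, hq0key]
      have h2 : 1 / (x * (1 - x)) < 1 / (1 / (4 * β)) :=
        one_div_lt_one_div_of_lt (by positivity) hxx
      rw [one_div_one_div] at h2
      linarith
  have hgq0 : 0 < gb β q0 := by
    have := hmono ⟨le_rfl, le_of_lt hq0a⟩ ⟨le_of_lt hq0a, le_rfl⟩ hq0a
    rwa [gb_half] at this
  obtain ⟨qt, hqt_lo, hqt_hi, hgqt⟩ :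
      ∃ qt : ℝ, 5/6 < qt ∧ qt < 1 ∧ gb β qt < 0 := by
    have he_pos : 0 < Real.exp (-(5 * β)) := Real.exp_pos _
    have he_small : Real.exp (-(5 * β)) < 1/5 := by
      have h1 : Real.exp (-(5 * β)) ≤ Real.exp (-5) := Real.exp_le_exp.2 (by linarith)
      have h2 : Real.exp (-5) < 1/5 := by
        rw [Real.exp_neg]
        have h3 : (5:ℝ) < Real.exp 5 := by linarith [Real.add_one_le_exp (5:ℝ)]
        have := inv_strictAnti₀ (by norm_num : (0:ℝ) < 5) h3
        linarith
      linarith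
    refine ⟨1 / (1 + Real.exp (-(5 * β))), ?_, ?_, ?_⟩
    · rw [lt_div_iff₀ (by positivity)]; linarith
    · rw [div_lt_one (by positivity)]; linarith
    · have hratio : (1 - 1 / (1 + Real.exp (-(5 * β)))) / (1 / (1 + Real.exp (-(5 * β))))
          = Real.exp (-(5 * β)) := by
        field_simp
        ring
      have hq1 : 2 * (1 / (1 + Real.exp (-(5 * β)))) - 1 < 1 := by
        have : 1 / (1 + Real.exp (-(5 * β))) < 1 := by
          rw [div_lt_one (by positivity)]; linarith
        linarith
      have hq2 : 0 < 2 * (1 / (1 + Real.exp (-(5 * β)))) - 1 := by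
        have : (1:ℝ)/2 < 1 / (1 + Real.exp (-(5 * β))) := by
          rw [lt_div_iff₀ (by positivity)]; linarith
        linarith
      rw [gb, hratio, Real.log_exp]
      nlinarith
  have hq0t : q0 < qt := by linarith
  have hcont : ContinuousOn (gb β) (Icc q0 qt) := by
    intro x hx
    exact (hasDerivAt_gb β (by linarith [hx.1] : (0:ℝ) < x)
      (by linarith [hx.2] : x < 1)).continuousAt.continuousWithinAt
  have h0mem : (0:ℝ) ∈ Icc (gb β qt) (gb β q0) := ⟨le_of_lt hgqt, le_of_lt hgq0⟩
  obtain ⟨qp, hqpmem, hgqp⟩ := intermediate_value_Icc' (le_of_lt hq0t) hcont h0mem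
  exact ⟨qp, ⟨by linarith [hqpmem.1], by linarith [hqpmem.2]⟩, hgqp⟩

/-- For `β > 1`: (i) there is a unique `q⁺ ∈ (1/2,1)` and a unique
`q⁻ ∈ (0,1/2)` with `ln((1-q)/q) + 2β(2q-1) = 0`, and `q⁺ + q⁻ = 1`;
(ii) `f_β` is strictly increasing on `(0,q⁻)`, strictly decreasing on `(q⁻,1/2)`,
strictly increasing on `(1/2,q⁺)`, strictly decreasing on `(q⁺,1)`; in particular
`q⁺` and `q⁻` are the maximizers of `f_β` on `(0,1)`;
(iii) `f_β''(α) = -1/(α(1-α)) + 4β` is strictly negative at `q⁺` and `q⁻`. -/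
theorem stmt3 (β : ℝ) (hβ : 1 < β) :
    ∃ qp qm : ℝ,
      qp ∈ Set.Ioo (1 / 2 : ℝ) 1 ∧ qm ∈ Set.Ioo (0 : ℝ) (1 / 2) ∧
      (Real.log ((1 - qp) / qp) + 2 * β * (2 * qp - 1) = 0) ∧
      (∀ q ∈ Set.Ioo (1 / 2 : ℝ) 1,
        Real.log ((1 - q) / q) + 2 * β * (2 * q - 1) = 0 → q = qp) ∧
      (Real.log ((1 - qm) / qm) + 2 * β * (2 * qm - 1) = 0) ∧
      (∀ q ∈ Set.Ioo (0 : ℝ) (1 / 2),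
        Real.log ((1 - q) / q) + 2 * β * (2 * q - 1) = 0 → q = qm) ∧
      qp + qm = 1 ∧
      StrictMonoOn (fbeta β) (Set.Ioo 0 qm) ∧
      StrictAntiOn (fbeta β) (Set.Ioo qm (1 / 2)) ∧
      StrictMonoOn (fbeta β) (Set.Ioo (1 / 2) qp) ∧
      StrictAntiOn (fbeta β) (Set.Ioo qp 1) ∧
      (∀ α ∈ Set.Ioo (0 : ℝ) 1, fbeta β α ≤ fbeta β qp ∧ fbeta β α ≤ fbeta β qm) ∧
      (-(1 / (qp * (1 - qp))) + 4 * β < 0) ∧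
      (-(1 / (qm * (1 - qm))) + 4 * β < 0) := by
  obtain ⟨qp, hqp, hgqp⟩ := exists_qp β hβ
  obtain ⟨hqp1, hqp2⟩ := hqp
  have hconc := gb_concave β
  -- sign of gb on (1/2, 1)
  have gpos : ∀ x : ℝ, 1/2 < x → x < qp → 0 < gb β x := fun x h1 h2 =>
    concave_pos hconc ⟨le_rfl, by norm_num⟩ ⟨le_of_lt hqp1, hqp2⟩ h1 h2 (gb_half β) hgqp
  have gneg : ∀ x : ℝ, qp < x → x < 1 → gb β x < 0 := fun x h1 h2 =>
    concave_neg hconc ⟨le_rfl, by norm_num⟩ ⟨by linarith, h2⟩ hqp1 h1 (gb_half β) hgqp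
  -- sign of gb on (0, 1/2) by symmetry
  have gpos' : ∀ x : ℝ, 0 < x → x < 1 - qp → 0 < gb β x := by
    intro x h1 h2
    have hsym := gb_symm β h1 (by linarith : x < 1)
    have := gneg (1 - x) (by linarith) (by linarith)
    linarith
  have gneg' : ∀ x : ℝ, 1 - qp < x → x < 1/2 → gb β x < 0 := by
    intro x h1 h2
    have hsym := gb_symm β (by linarith : 0 < x) (by linarith : x < 1)
    have := gpos (1 - x) (by linarith) (by linarith)
    linarith
  have hcontf : ∀ s : Set ℝ, s ⊆ Ioo 0 1 → ContinuousOn (fbeta β) s := by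
    intro s hs x hx
    exact (hasDerivAt_fbeta β (hs hx).1 (hs hx).2).continuousAt.continuousWithinAt
  have hderivf : ∀ x : ℝ, 0 < x → x < 1 → deriv (fbeta β) x = gb β x := fun x h1 h2 =>
    (hasDerivAt_fbeta β h1 h2).deriv
  refine ⟨qp, 1 - qp, ⟨hqp1, hqp2⟩, ⟨by linarith, by linarith⟩, hgqp, ?_, ?_, ?_, by ring,
    ?_, ?_, ?_, ?_, ?_, ?_, ?_⟩
  · -- uniqueness on (1/2, 1)
    intro q hq hgq
    by_contra hne
    rcases lt_or_gt_of_ne hne with h | h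
    · exact absurd hgq (ne_of_gt (gpos q hq.1 h))
    · exact absurd hgq (ne_of_lt (gneg q h hq.2))
  · -- gb β (1-qp) = 0
    have := gb_symm β (by linarith : (0:ℝ) < qp) hqp2
    show gb β (1 - qp) = 0
    rw [this, hgqp, neg_zero]
  · -- uniqueness on (0, 1/2)
    intro q hq hgq
    have hsym := gb_symm β hq.1 (by linarith [hq.2] : q < 1)
    have h0 : gb β (1 - q) = 0 := by rw [hsym]; show -gb β q = 0; rw [show gb β q = 0 from hgq, neg_zero]
    by_contra hne
    have h1q : 1 - q ∈ Ioo (1/2 : ℝ) 1 := ⟨by linarith [hq.2], by linarith [hq.1]⟩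
    rcases lt_or_gt_of_ne (show 1 - q ≠ qp by intro h; apply hne; linarith) with h | h
    · exact absurd h0 (ne_of_gt (gpos _ h1q.1 h))
    · exact absurd h0 (ne_of_lt (gneg _ h h1q.2))
  · -- StrictMonoOn (0, qm)
    apply strictMonoOn_of_deriv_pos (convex_Ioo _ _)
      (hcontf _ (fun x hx => ⟨hx.1, by linarith [hx.2, hqp1]⟩))
    rw [isOpen_Ioo.interior_eq]
    intro x hx
    rw [hderivf x hx.1 (by linarith [hx.2, hqp1])]
    exact gpos' x hx.1 hx.2
  · -- StrictAntiOn (qm, 1/2)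
    apply strictAntiOn_of_deriv_neg (convex_Ioo _ _)
      (hcontf _ (fun x hx => ⟨by linarith [hx.1, hqp2], by linarith [hx.2]⟩))
    rw [isOpen_Ioo.interior_eq]
    intro x hx
    rw [hderivf x (by linarith [hx.1, hqp2]) (by linarith [hx.2])]
    exact gneg' x hx.1 hx.2
  · -- StrictMonoOn (1/2, qp)
    apply strictMonoOn_of_deriv_pos (convex_Ioo _ _)
      (hcontf _ (fun x hx => ⟨by linarith [hx.1], by linarith [hx.2, hqp2]⟩))
    rw [isOpen_Ioo.interior_eq]
    intro x hx
    rw [hderivf x (by linarith [hx.1]) (by linarith [hx.2, hqp2])]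
    exact gpos x hx.1 hx.2
  · -- StrictAntiOn (qp, 1)
    apply strictAntiOn_of_deriv_neg (convex_Ioo _ _)
      (hcontf _ (fun x hx => ⟨by linarith [hx.1, hqp1], hx.2⟩))
    rw [isOpen_Ioo.interior_eq]
    intro x hx
    rw [hderivf x (by linarith [hx.1, hqp1]) hx.2]
    exact gneg x hx.1 hx.2
  · -- maximizers
    have hMc : StrictMonoOn (fbeta β) (Icc (1/2 : ℝ) qp) := by
      apply strictMonoOn_of_deriv_pos (convex_Icc _ _)
        (hcontf _ (fun x hx => ⟨by linarith [hx.1], by linarith [hx.2, hqp2]⟩))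
      rw [interior_Icc]
      intro x hx
      rw [hderivf x (by linarith [hx.1]) (by linarith [hx.2, hqp2])]
      exact gpos x hx.1 hx.2
    have hAc : StrictAntiOn (fbeta β) (Ico qp 1) := by
      apply strictAntiOn_of_deriv_neg (convex_Ico _ _)
        (hcontf _ (fun x hx => ⟨by linarith [hx.1, hqp1], hx.2⟩))
      rw [interior_Ico]
      intro x hx
      rw [hderivf x (by linarith [hx.1, hqp1]) hx.2]
      exact gneg x hx.1 hx.2
    have hmaxR : ∀ x : ℝ, 1/2 ≤ x → x < 1 → fbeta β x ≤ fbeta β qp := by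
      intro x h1 h2
      rcases le_or_gt x qp with h | h
      · rcases eq_or_lt_of_le h with rfl | h'
        · exact le_rfl
        · exact le_of_lt (hMc ⟨h1, h⟩ ⟨by linarith, le_rfl⟩ h')
      · exact le_of_lt (hAc ⟨le_rfl, hqp2⟩ ⟨le_of_lt h, h2⟩ h)
    have hsymf : fbeta β (1 - qp) = fbeta β qp := fbeta_symm β qp
    intro x hx
    have hmain : fbeta β x ≤ fbeta β qp := by
      rcases le_or_gt (1/2 : ℝ) x with h | h
      · exact hmaxR x h hx.2
      · rw [← fbeta_symm β x]
        exact hmaxR (1 - x) (by linarith) (by linarith [hx.1])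
    exact ⟨hmain, by rwa [hsymf]⟩
  · -- second derivative at qp
    have hcont : ContinuousOn (gb β) (Icc (1/2 : ℝ) qp) := by
      intro x hx
      exact (hasDerivAt_gb β (by linarith [hx.1] : (0:ℝ) < x)
        (by linarith [hx.2, hqp2] : x < 1)).continuousAt.continuousWithinAt
    obtain ⟨c, hc, hpc⟩ := exists_hasDerivAt_eq_slope (gb β) (pb β) hqp1 hcont
      (fun x hx => hasDerivAt_gb β (by linarith [hx.1]) (by linarith [hx.2, hqp2]))
    rw [hgqp, gb_half, sub_zero, zero_div] at hpc
    have hlt : pb β qp < pb β c :=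
      pb_anti β ⟨hc.1, by linarith [hc.2]⟩ ⟨hqp1, hqp2⟩ hc.2
    rw [hpc] at hlt
    rw [show -(1 / (qp * (1 - qp))) + 4 * β = pb β qp from by rw [pb]; ring]
    exact hlt
  · -- second derivative at qm
    have heq : (1 - qp) * (1 - (1 - qp)) = qp * (1 - qp) := by ring
    rw [heq]
    have hcont : ContinuousOn (gb β) (Icc (1/2 : ℝ) qp) := by
      intro x hx
      exact (hasDerivAt_gb β (by linarith [hx.1] : (0:ℝ) < x)
        (by linarith [hx.2, hqp2] : x < 1)).continuousAt.continuousWithinAt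
    obtain ⟨c, hc, hpc⟩ := exists_hasDerivAt_eq_slope (gb β) (pb β) hqp1 hcont
      (fun x hx => hasDerivAt_gb β (by linarith [hx.1]) (by linarith [hx.2, hqp2]))
    rw [hgqp, gb_half, sub_zero, zero_div] at hpc
    have hlt : pb β qp < pb β c :=
      pb_anti β ⟨hc.1, by linarith [hc.2]⟩ ⟨hqp1, hqp2⟩ hc.2
    rw [hpc] at hlt
    rw [show -(1 / (qp * (1 - qp))) + 4 * β = pb β qp from by rw [pb]; ring]
    exact hlt
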